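/- Let H_1, …, H_n be affine hyperplanes in ℝ^d (each H_k = { x ∈ ℝ^d : ⟨w_k, x⟩ + b_k = 0 } with w_k ≠ 0). Then the complement ℝ^d \ (H_1 ∪ ⋯ ∪ H_n) has at most Σ_{i=0}^{d} C(n, i) connected components, where C(n, i) denotes the binomial coefficient. In particular, for fixed n, this upper bound on the number of regions grows with the dimension d, and the number of regions spanned by an arrangement of n hyperplanes scales (up to this binomial bound) exponentially with the intrinsic dimension of the input space. -/

import Mathlib

open Matrix Finset

private lemma sum_dotProduct' {d : ℕ} {ι : Type*} (s : Finset ι) (v : ι → Fin d → ℝ)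
    (x : Fin d → ℝ) : (∑ k ∈ s, v k) ⬝ᵥ x = ∑ k ∈ s, v k ⬝ᵥ x := by
  simp only [dotProduct, Finset.sum_apply, Finset.sum_mul]
  exact Finset.sum_comm

private lemma arr_aux {d n : ℕ} (w : Fin n → (Fin d → ℝ)) (b : Fin n → ℝ)
    (s : Finset (Fin n)) (a : Fin n → ℝ)
    (ha : ∑ k ∈ s, a k • w k = 0) (k0 : Fin n) (hk0 : k0 ∈ s) (hak0 : a k0 ≠ 0)
    (hc : ∑ k ∈ s, a k * b k ≤ 0)
    (hsh : ∀ t ⊆ s, ∃ x : Fin d → ℝ, (∀ k : Fin n, w k ⬝ᵥ x + b k ≠ 0) ∧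
      ∀ k ∈ s, (0 < w k ⬝ᵥ x + b k ↔ k ∈ t)) : False := by
  classical
  obtain ⟨x, hx0, hx⟩ := hsh (s.filter fun k => 0 < a k) (filter_subset _ _)
  have key : ∑ k ∈ s, a k * (w k ⬝ᵥ x + b k) = ∑ k ∈ s, a k * b k := by
    have h1 : ∑ k ∈ s, a k * (w k ⬝ᵥ x) = 0 := by
      have h2 := sum_dotProduct' s (fun k => a k • w k) x
      rw [ha] at h2
      simpa [smul_dotProduct, smul_eq_mul] using h2.symm
    calc ∑ k ∈ s, a k * (w k ⬝ᵥ x + b k)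
        = ∑ k ∈ s, (a k * (w k ⬝ᵥ x) + a k * b k) := by
          apply Finset.sum_congr rfl; intro k _; ring
      _ = ∑ k ∈ s, a k * (w k ⬝ᵥ x) + ∑ k ∈ s, a k * b k := Finset.sum_add_distrib
      _ = ∑ k ∈ s, a k * b k := by rw [h1, zero_add]
  have hterm : ∀ k ∈ s, a k ≠ 0 → 0 < a k * (w k ⬝ᵥ x + b k) := by
    intro k hk hak
    have hfne := hx0 k
    have hiff := hx k hk
    rcases hak.lt_or_gt with h | h
    · have hnot : k ∉ s.filter (fun k => 0 < a k) := by
        simp only [mem_filter, not_and]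
        intro _
        linarith
      have hf : ¬ 0 < w k ⬝ᵥ x + b k := fun hp => hnot (hiff.1 hp)
      have hf' : w k ⬝ᵥ x + b k < 0 := (not_lt.1 hf).lt_of_ne hfne
      exact mul_pos_of_neg_of_neg h hf'
    · have hin : k ∈ s.filter (fun k => 0 < a k) := mem_filter.2 ⟨hk, h⟩
      exact mul_pos h (hiff.2 hin)
  have hpos : 0 < ∑ k ∈ s, a k * (w k ⬝ᵥ x + b k) := by
    apply Finset.sum_pos'
    · intro k hk
      rcases eq_or_ne (a k) 0 with h | h
      · simp [h]
      · exact (hterm k hk h).le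
    · exact ⟨k0, hk0, hterm k0 hk0 hak0⟩
  linarith [key ▸ hpos]

private lemma arr_no_shatter {d n : ℕ} (w : Fin n → (Fin d → ℝ)) (b : Fin n → ℝ)
    (s : Finset (Fin n)) (hcard : s.card = d + 1)
    (hsh : ∀ t ⊆ s, ∃ x : Fin d → ℝ, (∀ k : Fin n, w k ⬝ᵥ x + b k ≠ 0) ∧
      ∀ k ∈ s, (0 < w k ⬝ᵥ x + b k ↔ k ∈ t)) : False := by
  classical
  have hdep : ¬ LinearIndependent ℝ (fun k : ↥s => w ↑k) := by
    intro h
    have h2 := h.fintype_card_le_finrank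
    rw [Fintype.card_coe, hcard, Module.finrank_pi, Fintype.card_fin] at h2
    omega
  obtain ⟨g, hg0, i0, hi0⟩ := Fintype.not_linearIndependent_iff.1 hdep
  set a : Fin n → ℝ := fun k => if h : k ∈ s then g ⟨k, h⟩ else 0 with ha_def
  have haval : ∀ i : ↥s, a ↑i = g i := by
    intro i
    simp [ha_def, i.2]
  have hsum : ∑ k ∈ s, a k • w k = 0 := by
    rw [← Finset.sum_attach s (fun k => a k • w k)]
    calc ∑ i ∈ s.attach, a ↑i • w ↑i = ∑ i ∈ s.attach, g i • w ↑i := by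
          apply Finset.sum_congr rfl; intro i _; rw [haval]
      _ = 0 := by rw [← Finset.univ_eq_attach]; exact hg0
  have hai0 : a ↑i0 ≠ 0 := by rw [haval]; exact hi0
  rcases le_or_gt (∑ k ∈ s, a k * b k) 0 with h | h
  · exact arr_aux w b s a hsum ↑i0 i0.2 hai0 h hsh
  · refine arr_aux w b s (-a) ?_ ↑i0 i0.2 (neg_ne_zero.2 hai0) ?_ hsh
    · calc ∑ k ∈ s, (-a) k • w k = -∑ k ∈ s, a k • w k := by
            rw [← Finset.sum_neg_distrib]; apply Finset.sum_congr rfl; intro k _; simp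
        _ = 0 := by rw [hsum, neg_zero]
    · have : ∑ k ∈ s, (-a) k * b k = -∑ k ∈ s, a k * b k := by
        rw [← Finset.sum_neg_distrib]; apply Finset.sum_congr rfl; intro k _; simp only [Pi.neg_apply]; ring
      rw [this]; linarith

/-- **Hyperplane arrangement region bound.**
The complement in `ℝ^d` of the union of `n` affine hyperplanes
`H_k = {x : ⟨w_k, x⟩ + b_k = 0}` (with `w_k ≠ 0`) has at most
`∑_{i=0}^{d} C(n, i)` connected components. -/
theorem hyperplane_arrangement_components_le
    (d n : ℕ)
    (w : Fin n → (Fin d → ℝ)) (b : Fin n → ℝ)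
    (hw : ∀ k : Fin n, w k ≠ 0)
    (H : Fin n → Set (Fin d → ℝ))
    (hH : ∀ k : Fin n, H k = {x : Fin d → ℝ | w k ⬝ᵥ x + b k = 0}) :
    Nat.card (ConnectedComponents ↥((Set.univ : Set (Fin d → ℝ)) \ ⋃ k : Fin n, H k)) ≤
      ∑ i ∈ Finset.range (d + 1), n.choose i := by
  classical
  set C : Set (Fin d → ℝ) := (Set.univ : Set (Fin d → ℝ)) \ ⋃ k : Fin n, H k with hC
  have hmem : ∀ x : Fin d → ℝ, x ∈ C ↔ ∀ k, w k ⬝ᵥ x + b k ≠ 0 := by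
    intro x
    simp [hC, Set.mem_diff, Set.mem_iUnion, hH, Set.mem_setOf_eq, not_exists]
  -- continuity of the affine functionals
  have hfcont : ∀ k : Fin n, Continuous fun x : Fin d → ℝ => w k ⬝ᵥ x + b k := by
    intro k
    apply Continuous.add _ continuous_const
    show Continuous fun x : Fin d → ℝ => ∑ i, w k i * x i
    exact continuous_finset_sum _ fun i _ => continuous_const.mul (continuous_apply i)
  -- the sign map
  set σ : C → (Fin n → Bool) := fun x k => decide (0 < w k ⬝ᵥ (x : Fin d → ℝ) + b k) with hσ
  have hopen_pos : ∀ k : Fin n, IsOpen {x : C | 0 < w k ⬝ᵥ (x : Fin d → ℝ) + b k} :=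
    fun k => isOpen_lt continuous_const ((hfcont k).comp continuous_subtype_val)
  have hopen_neg : ∀ k : Fin n, IsOpen {x : C | w k ⬝ᵥ (x : Fin d → ℝ) + b k < 0} :=
    fun k => isOpen_lt ((hfcont k).comp continuous_subtype_val) continuous_const
  have hcont : Continuous σ := by
    apply continuous_pi
    intro k
    apply IsLocallyConstant.continuous
    rw [IsLocallyConstant.iff_isOpen_fiber]
    intro y
    cases y with
    | true =>
        convert hopen_pos k using 1
        ext x
        simp [hσ]
    | false =>
        convert hopen_neg k using 1
        ext x
        have hne : w k ⬝ᵥ (x : Fin d → ℝ) + b k ≠ 0 := (hmem x).1 x.2 k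
        simp only [Set.mem_preimage, Set.mem_singleton_iff, hσ, decide_eq_false_iff_not,
          Set.mem_setOf_eq, not_lt]
        exact ⟨fun h => h.lt_of_ne hne, le_of_lt⟩
  set ρ : ConnectedComponents C → (Fin n → Bool) := hcont.connectedComponentsLift with hρ
  have hρcoe : ∀ x : C, ρ x = σ x := fun x => hcont.connectedComponentsLift_apply_coe x
  -- injectivity of ρ
  have hρinj : Function.Injective ρ := by
    intro c1 c2 hc
    obtain ⟨x, rfl⟩ := ConnectedComponents.surjective_coe c1
    obtain ⟨y, rfl⟩ := ConnectedComponents.surjective_coe c2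
    rw [hρcoe, hρcoe] at hc
    have hsame : ∀ k, (0 < w k ⬝ᵥ (x : Fin d → ℝ) + b k ↔ 0 < w k ⬝ᵥ (y : Fin d → ℝ) + b k) := by
      intro k
      have := congrFun hc k
      simpa [hσ, decide_eq_decide] using this
    have hseg : segment ℝ (x : Fin d → ℝ) (y : Fin d → ℝ) ⊆ C := by
      intro z hz
      rw [segment_eq_image] at hz
      obtain ⟨t, ht, rfl⟩ := hz
      rw [hmem]
      intro k
      have heq : w k ⬝ᵥ ((1 - t) • (x : Fin d → ℝ) + t • (y : Fin d → ℝ)) + b k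
          = (1 - t) * (w k ⬝ᵥ (x : Fin d → ℝ) + b k) + t * (w k ⬝ᵥ (y : Fin d → ℝ) + b k) := by
        rw [dotProduct_add, dotProduct_smul, dotProduct_smul, smul_eq_mul, smul_eq_mul]
        ring
      rw [heq]
      have hxk : w k ⬝ᵥ (x : Fin d → ℝ) + b k ≠ 0 := (hmem _).1 x.2 k
      have hyk : w k ⬝ᵥ (y : Fin d → ℝ) + b k ≠ 0 := (hmem _).1 y.2 k
      rcases hxk.lt_or_gt with h | h
      · have h2 : w k ⬝ᵥ (y : Fin d → ℝ) + b k < 0 :=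
          ((not_lt.1 fun hp => absurd ((hsame k).2 hp) (not_lt.2 h.le)).lt_of_ne hyk)
        have : (1 - t) * (w k ⬝ᵥ (x : Fin d → ℝ) + b k)
            + t * (w k ⬝ᵥ (y : Fin d → ℝ) + b k) < 0 := by
          rcases ht.1.eq_or_lt with heq | ht0
          · rw [← heq]; simpa using h
          · have h4 : t * (w k ⬝ᵥ (y : Fin d → ℝ) + b k) < 0 := mul_neg_of_pos_of_neg ht0 h2
            have h3 : (1 - t) * (w k ⬝ᵥ (x : Fin d → ℝ) + b k) ≤ 0 :=
              mul_nonpos_of_nonneg_of_nonpos (by linarith [ht.2]) h.le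
            linarith
        exact this.ne
      · have h2 : 0 < w k ⬝ᵥ (y : Fin d → ℝ) + b k := (hsame k).1 h
        have : 0 < (1 - t) * (w k ⬝ᵥ (x : Fin d → ℝ) + b k)
            + t * (w k ⬝ᵥ (y : Fin d → ℝ) + b k) := by
          rcases ht.1.eq_or_lt with heq | ht0
          · rw [← heq]; simpa using h
          · have h4 : 0 < t * (w k ⬝ᵥ (y : Fin d → ℝ) + b k) := mul_pos ht0 h2
            have h3 : 0 ≤ (1 - t) * (w k ⬝ᵥ (x : Fin d → ℝ) + b k) :=
              mul_nonneg (by linarith [ht.2]) h.le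
            linarith
        exact this.ne'
    set S : Set C := Subtype.val ⁻¹' (segment ℝ (x : Fin d → ℝ) (y : Fin d → ℝ)) with hS
    have hSpre : IsPreconnected S := by
      rw [← Topology.IsInducing.subtypeVal.isPreconnected_image]
      have himg : Subtype.val '' S = segment ℝ (x : Fin d → ℝ) (y : Fin d → ℝ) := by
        rw [hS, Subtype.image_preimage_coe]
        exact Set.inter_eq_right.2 hseg
      rw [himg]
      exact (convex_segment _ _).isPreconnected
    have hxS : x ∈ S := left_mem_segment ℝ _ _
    have hyS : y ∈ S := right_mem_segment ℝ _ _
    rw [ConnectedComponents.coe_eq_coe']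
    exact hSpre.subset_connectedComponent hyS hxS
  -- the family of realized sign patterns
  set 𝒜 : Finset (Finset (Fin n)) := Finset.univ.filter (fun u => ∃ x : Fin d → ℝ,
    (∀ k, w k ⬝ᵥ x + b k ≠ 0) ∧ ∀ k, (0 < w k ⬝ᵥ x + b k ↔ k ∈ u)) with h𝒜
  have hF : ∀ c : ConnectedComponents C,
      (Finset.univ.filter fun k => ρ c k = true) ∈ 𝒜 := by
    intro c
    obtain ⟨x, rfl⟩ := ConnectedComponents.surjective_coe c
    rw [h𝒜, mem_filter]
    refine ⟨mem_univ _, (x : Fin d → ℝ), (hmem _).1 x.2, fun k => ?_⟩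
    simp [hρcoe, hσ, mem_filter]
  set Φ : ConnectedComponents C → ↥𝒜 := fun c => ⟨_, hF c⟩ with hΦ
  have hΦinj : Function.Injective Φ := by
    intro c1 c2 hc
    apply hρinj
    funext k
    have h2 := Finset.ext_iff.1 (Subtype.ext_iff.1 hc) k
    simp only [hΦ, mem_filter, mem_univ, true_and] at h2
    cases h1 : ρ c1 k <;> cases h3 : ρ c2 k <;> simp_all
  -- counting
  have hcard1 : Nat.card (ConnectedComponents C) ≤ Nat.card ↥𝒜 :=
    Nat.card_le_card_of_injective Φ hΦinj
  rw [Nat.card_eq_finsetCard] at hcard1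
  have hvc : 𝒜.vcDim ≤ d := by
    apply Finset.sup_le
    intro s hs
    rw [mem_shatterer] at hs
    by_contra hlt
    push_neg at hlt
    obtain ⟨s', hs's, hs'card⟩ := Finset.exists_subset_card_eq hlt
    have hsh' := hs.mono_right hs's
    apply arr_no_shatter w b s' hs'card
    intro t ht
    obtain ⟨u, hu, hsu⟩ := hsh' ht
    rw [h𝒜, mem_filter] at hu
    obtain ⟨-, x, hx1, hx2⟩ := hu
    refine ⟨x, hx1, fun k hk => ?_⟩
    rw [hx2 k, ← hsu, mem_inter]
    tauto
  calc Nat.card (ConnectedComponents ↥C) ≤ 𝒜.card := hcard1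
    _ ≤ 𝒜.shatterer.card := Finset.card_le_card_shatterer 𝒜
    _ ≤ ∑ k ∈ Finset.Iic 𝒜.vcDim, (Fintype.card (Fin n)).choose k :=
        Finset.card_shatterer_le_sum_vcDim
    _ ≤ ∑ i ∈ Finset.range (d + 1), n.choose i := by
        rw [Fintype.card_fin]
        have : Finset.Iic 𝒜.vcDim ⊆ Finset.range (d + 1) := by
          intro i hi
          rw [Finset.mem_Iic] at hi
          rw [Finset.mem_range]
          omega
        exact Finset.sum_le_sum_of_subset this
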